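/- (Forward stretching) Let x, y ∈ J(𝓕). If y and x have the same external address (i.e. the same second coordinate in ℤ^ℕ) and T(y) > T(x), then for every n ≥ 1, T(𝓕^n(y)) ≥ F^n(T(y) − T(x)). -/

import Mathlib

open Topology Filter Set

/-- The model map `F(t) = e^t - 1`. -/
noncomputable def Fmap (t : ℝ) : ℝ := Real.exp t - 1

/-- The model `𝓕(t, s) = (F(t) - 2π|s₀|, σ(s))` where `σ` is the shift. -/
noncomputable def calF : ℝ × (ℕ → ℤ) → ℝ × (ℕ → ℤ) :=
  fun x => (Fmap x.1 - 2 * Real.pi * |(x.2 0 : ℝ)|, fun n => x.2 (n + 1))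

/-- The Julia set of the model map. -/
def JcalF : Set (ℝ × (ℕ → ℤ)) :=
  {x | ∀ n : ℕ, 0 ≤ (calF^[n] x).1}

/-- Forward stretching. -/
theorem stmt6 (x y : ℝ × (ℕ → ℤ)) (hx : x ∈ JcalF) (hy : y ∈ JcalF)
    (hs : y.2 = x.2) (ht : x.1 < y.1) :
    ∀ n : ℕ, 1 ≤ n → Fmap^[n] (y.1 - x.1) ≤ (calF^[n] y).1 := by
  intro n _
  set d := y.1 - x.1 with hd
  have key : ∀ m : ℕ, (calF^[m] y).2 = (calF^[m] x).2 ∧ 0 < Fmap^[m] d ∧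
      Fmap^[m] d ≤ (calF^[m] y).1 - (calF^[m] x).1 := by
    intro m
    induction m with
    | zero => exact ⟨hs, by simp [hd]; linarith, by simp [hd]⟩
    | succ m ih =>
      obtain ⟨h2, hpos, h1⟩ := ih
      refine ⟨?_, ?_, ?_⟩
      · rw [Function.iterate_succ_apply', Function.iterate_succ_apply']
        simp [calF, h2]
      · rw [Function.iterate_succ_apply']
        have : (1 : ℝ) < Real.exp (Fmap^[m] d) := by rw [Real.one_lt_exp_iff]; exact hpos
        simp only [Fmap]
        linarith
      · rw [Function.iterate_succ_apply', Function.iterate_succ_apply',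
          Function.iterate_succ_apply']
        simp only [calF, h2]
        set a := (calF^[m] x).1
        set b := (calF^[m] y).1
        have ha : 0 ≤ a := hx m
        have h1' : a + Fmap^[m] d ≤ b := by linarith
        have hea : 1 ≤ Real.exp a := Real.one_le_exp ha
        have heF : 1 ≤ Real.exp (Fmap^[m] d) := Real.one_le_exp hpos.le
        have hb : Real.exp a * Real.exp (Fmap^[m] d) ≤ Real.exp b := by
          rw [← Real.exp_add]; exact Real.exp_le_exp.mpr h1'
        have : Real.exp (Fmap^[m] d) - 1 ≤ Real.exp b - Real.exp a := by
          have := mul_le_mul_of_nonneg_left (le_sub_iff_add_le.mpr (by linarith : 1 + (Real.exp (Fmap^[m] d) - 1) ≤ Real.exp (Fmap^[m] d))) (by linarith : (0:ℝ) ≤ Real.exp a)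
          nlinarith
        simp only [Fmap]
        linarith
  have h0 := hx n
  have h := (key n).2.2
  linarith
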